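/- Let H₁ and H₂ be ℤ/2-graded Hilbert spaces (or Hilbert C*-modules), let D₁ be an odd self-adjoint Fredholm operator on H₁ and D₂ an odd self-adjoint operator on H₂ with closed range whose kernel is one-dimensional and spanned by an even vector. Let P denote the projection of H₁ ⊗̂ H₂ onto H₁ ⊗̂ ker(D₂). Then the graded tensor product operator D = D₁ ⊗̂ 1 + 1 ⊗̂ D₂ commutes with P, the compression P D P, when identified with an operator on H₁ via H₁ ⊗̂ ker(D₂) ≅ H₁, equals D₁, and hence ind(D) = ind(D₁) + ind(P^⊥ D P^⊥). -/

import Mathlib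

open scoped ComplexInnerProductSpace

variable {H : Type*} [NormedAddCommGroup H] [InnerProductSpace ℂ H] [CompleteSpace H]

/-- The graded index of an odd self-adjoint Fredholm operator `D` on a ℤ/2-graded Hilbert
space with grading operator `γ`:
`ind(D) = dim(ker D ∩ H⁺) - dim(ker D ∩ H⁻)`. -/
noncomputable def grIndex (γ D : H →L[ℂ] H) : ℤ :=
  (Module.finrank ℂ ↥(LinearMap.ker (D : H →ₗ[ℂ] H) ⊓ LinearMap.ker ((γ - 1 : H →L[ℂ] H) : H →ₗ[ℂ] H)) : ℤ) -
    (Module.finrank ℂ ↥(LinearMap.ker (D : H →ₗ[ℂ] H) ⊓ LinearMap.ker ((γ + 1 : H →L[ℂ] H) : H →ₗ[ℂ] H)) : ℤ)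


set_option maxHeartbeats 1000000

open scoped TensorProduct

section helpers

variable {E₁ E₂ F : Type*} [NormedAddCommGroup E₁] [InnerProductSpace ℂ E₁]
  [NormedAddCommGroup E₂] [InnerProductSpace ℂ E₂]
  [NormedAddCommGroup F] [InnerProductSpace ℂ F]

private lemma aux_rep (w : E₁ ⊗[ℂ] E₂) :
    ∃ (n : ℕ) (e : Fin n → E₁) (y : Fin n → E₂), Orthonormal ℂ e ∧ w = ∑ i, e i ⊗ₜ[ℂ] y i := by
  classical
  obtain ⟨s, hs⟩ := TensorProduct.exists_finset w
  set V := Submodule.span ℂ ((s.image Prod.fst : Finset E₁) : Set E₁) with hV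
  let b := stdOrthonormalBasis ℂ V
  refine ⟨Module.finrank ℂ ↥V, fun i => (b i : E₁),
    fun i => ∑ p ∈ s, ⟪(b i : E₁), p.1⟫ • p.2, ?_, ?_⟩
  · rw [orthonormal_iff_ite]
    intro i j
    have h := orthonormal_iff_ite.mp b.orthonormal i j
    rwa [Submodule.coe_inner] at h
  · have hrw : ∀ p ∈ s, p.1 ⊗ₜ[ℂ] p.2
        = ∑ i, (b i : E₁) ⊗ₜ[ℂ] (⟪(b i : E₁), p.1⟫ • p.2) := by
      intro p hp
      have hmem : p.1 ∈ V := by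
        apply Submodule.subset_span
        simp only [Finset.coe_image, Set.mem_image, Finset.mem_coe]
        exact ⟨p, hp, rfl⟩
      have h1 : p.1 = ∑ i, ⟪(b i : E₁), p.1⟫ • (b i : E₁) := by
        have h0 := b.sum_repr' (⟨p.1, hmem⟩ : V)
        calc p.1 = ((⟨p.1, hmem⟩ : V) : E₁) := rfl
          _ = ((∑ i, ⟪b i, (⟨p.1, hmem⟩ : V)⟫ • b i : V) : E₁) := by rw [h0]
          _ = ∑ i, ⟪(b i : E₁), p.1⟫ • (b i : E₁) := by
              rw [Submodule.coe_sum]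
              exact Finset.sum_congr rfl fun i _ => rfl
      conv_lhs => rw [h1, TensorProduct.sum_tmul]
      refine Finset.sum_congr rfl fun i _ => ?_
      rw [TensorProduct.smul_tmul]
    rw [hs, Finset.sum_congr rfl hrw, Finset.sum_comm]
    exact Finset.sum_congr rfl fun i _ => (TensorProduct.tmul_sum _ _ _).symm

private lemma aux_norm (t : E₁ →ₗ[ℂ] E₂ →ₗ[ℂ] F)
    (hinner : ∀ (x x' : E₁) (y y' : E₂), ⟪t x y, t x' y'⟫ = ⟪x, x'⟫ * ⟪y, y'⟫)
    {n : ℕ} {e : Fin n → E₁} (he : Orthonormal ℂ e) (y : Fin n → E₂) :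
    ‖∑ i, t (e i) (y i)‖ ^ 2 = ∑ i, ‖y i‖ ^ 2 := by
  classical
  have hite := orthonormal_iff_ite.mp he
  have h1 : ⟪∑ i, t (e i) (y i), ∑ i, t (e i) (y i)⟫ = ∑ i, ⟪y i, y i⟫ := by
    rw [sum_inner]
    have : ∀ i : Fin n, ⟪t (e i) (y i), ∑ j, t (e j) (y j)⟫ = ⟪y i, y i⟫ := by
      intro i
      rw [inner_sum]
      have : ∀ j : Fin n, ⟪t (e i) (y i), t (e j) (y j)⟫
          = if i = j then ⟪y i, y j⟫ else 0 := by
        intro j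
        rw [hinner, hite]
        by_cases h : i = j <;> simp [h]
      rw [Finset.sum_congr rfl fun j _ => this j]
      simp
    exact Finset.sum_congr rfl fun i _ => this i
  simp only [inner_self_eq_norm_sq_to_K] at h1
  exact_mod_cast h1

private lemma aux_bound_right (t : E₁ →ₗ[ℂ] E₂ →ₗ[ℂ] F)
    (hinner : ∀ (x x' : E₁) (y y' : E₂), ⟪t x y, t x' y'⟫ = ⟪x, x'⟫ * ⟪y, y'⟫)
    (T : E₂ →L[ℂ] E₂) (w : E₁ ⊗[ℂ] E₂) :
    ‖TensorProduct.lift t (TensorProduct.map LinearMap.id (T : E₂ →ₗ[ℂ] E₂) w)‖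
      ≤ ‖T‖ * ‖TensorProduct.lift t w‖ := by
  obtain ⟨n, e, y, he, rfl⟩ := aux_rep w
  have hl : ∀ (z : Fin n → E₂),
      TensorProduct.lift t (∑ i, e i ⊗ₜ[ℂ] z i) = ∑ i, t (e i) (z i) := by
    intro z
    rw [map_sum]
    exact Finset.sum_congr rfl fun i _ => TensorProduct.lift.tmul _ _
  have hmap : TensorProduct.map LinearMap.id (T : E₂ →ₗ[ℂ] E₂) (∑ i, e i ⊗ₜ[ℂ] y i)
      = ∑ i, e i ⊗ₜ[ℂ] (T (y i)) := by
    rw [map_sum]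
    exact Finset.sum_congr rfl fun i _ => by simp [TensorProduct.map_tmul]
  rw [hmap, hl, hl]
  have h1 := aux_norm t hinner he (fun i => T (y i))
  have h2 := aux_norm t hinner he y
  have h3 : ‖∑ i, t (e i) (T (y i))‖ ^ 2 ≤ (‖T‖ * ‖∑ i, t (e i) (y i)‖) ^ 2 := by
    rw [h1, mul_pow, h2, Finset.mul_sum]
    refine Finset.sum_le_sum fun i _ => ?_
    calc ‖T (y i)‖ ^ 2 ≤ (‖T‖ * ‖y i‖) ^ 2 :=
          pow_le_pow_left₀ (norm_nonneg _) (T.le_opNorm _) 2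
      _ = ‖T‖ ^ 2 * ‖y i‖ ^ 2 := by ring
  exact le_of_pow_le_pow_left₀ two_ne_zero (by positivity) h3

private lemma aux_bound_left (t : E₁ →ₗ[ℂ] E₂ →ₗ[ℂ] F)
    (hinner : ∀ (x x' : E₁) (y y' : E₂), ⟪t x y, t x' y'⟫ = ⟪x, x'⟫ * ⟪y, y'⟫)
    (T : E₁ →L[ℂ] E₁) (w : E₁ ⊗[ℂ] E₂) :
    ‖TensorProduct.lift t (TensorProduct.map (T : E₁ →ₗ[ℂ] E₁) LinearMap.id w)‖
      ≤ ‖T‖ * ‖TensorProduct.lift t w‖ := by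
  have hflip : ∀ u : E₁ ⊗[ℂ] E₂,
      TensorProduct.lift t.flip (TensorProduct.comm ℂ E₁ E₂ u) = TensorProduct.lift t u := by
    intro u
    induction u using TensorProduct.induction_on with
    | zero => simp
    | tmul x y => simp
    | add a b ha hb => rw [map_add, map_add, map_add, ha, hb]
  have hcm : ∀ u : E₁ ⊗[ℂ] E₂,
      TensorProduct.comm ℂ E₁ E₂ (TensorProduct.map (T : E₁ →ₗ[ℂ] E₁) LinearMap.id u)
        = TensorProduct.map LinearMap.id (T : E₁ →ₗ[ℂ] E₁) (TensorProduct.comm ℂ E₁ E₂ u) := by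
    intro u
    induction u using TensorProduct.induction_on with
    | zero => simp
    | tmul x y => simp
    | add a b ha hb => rw [map_add, map_add, map_add, map_add, ha, hb]
  rw [← hflip, hcm]
  have hinner' : ∀ (y y' : E₂) (x x' : E₁),
      ⟪t.flip y x, t.flip y' x'⟫ = ⟪y, y'⟫ * ⟪x, x'⟫ := by
    intro y y' x x'
    simp only [LinearMap.flip_apply]
    rw [hinner]; ring
  have := aux_bound_right t.flip hinner' T (TensorProduct.comm ℂ E₁ E₂ w)
  rwa [hflip] at this


private lemma tensor_op_exists [CompleteSpace F]
    (t : E₁ →ₗ[ℂ] E₂ →ₗ[ℂ] F)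
    (hinner : ∀ (x x' : E₁) (y y' : E₂), ⟪t x y, t x' y'⟫ = ⟪x, x'⟫ * ⟪y, y'⟫)
    (hdense : Dense (↑(Submodule.span ℂ (Set.range fun p : E₁ × E₂ => t p.1 p.2)) : Set F))
    (T₁ : E₁ →L[ℂ] E₁) (T₂ : E₂ →L[ℂ] E₂) :
    ∃ A : F →L[ℂ] F, ∀ x y, A (t x y) = t (T₁ x) (T₂ y) := by
  classical
  set τ : E₁ ⊗[ℂ] E₂ →ₗ[ℂ] F := TensorProduct.lift t with hτ
  have hτt : ∀ (x : E₁) (y : E₂), τ (x ⊗ₜ[ℂ] y) = t x y := fun x y => rfl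
  set L : E₁ ⊗[ℂ] E₂ →ₗ[ℂ] F :=
    τ ∘ₗ TensorProduct.map (T₁ : E₁ →ₗ[ℂ] E₁) (T₂ : E₂ →ₗ[ℂ] E₂) with hL
  have hmapsplit : ∀ w : E₁ ⊗[ℂ] E₂,
      TensorProduct.map (T₁ : E₁ →ₗ[ℂ] E₁) (T₂ : E₂ →ₗ[ℂ] E₂) w
        = TensorProduct.map (T₁ : E₁ →ₗ[ℂ] E₁) LinearMap.id
            (TensorProduct.map LinearMap.id (T₂ : E₂ →ₗ[ℂ] E₂) w) := by
    intro w
    induction w using TensorProduct.induction_on with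
    | zero => simp
    | tmul x y => simp
    | add a b ha hb => rw [map_add, map_add, map_add, ha, hb]
  have hbound : ∀ w, ‖L w‖ ≤ (‖T₁‖ * ‖T₂‖) * ‖τ w‖ := by
    intro w
    have h1 : L w = τ (TensorProduct.map (T₁ : E₁ →ₗ[ℂ] E₁) LinearMap.id
        (TensorProduct.map LinearMap.id (T₂ : E₂ →ₗ[ℂ] E₂) w)) := by
      rw [hL, LinearMap.comp_apply, hmapsplit]
    rw [h1]
    calc ‖τ (TensorProduct.map (T₁ : E₁ →ₗ[ℂ] E₁) LinearMap.id
            (TensorProduct.map LinearMap.id (T₂ : E₂ →ₗ[ℂ] E₂) w))‖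
        ≤ ‖T₁‖ * ‖τ (TensorProduct.map LinearMap.id (T₂ : E₂ →ₗ[ℂ] E₂) w)‖ :=
          aux_bound_left t hinner T₁ _
      _ ≤ ‖T₁‖ * (‖T₂‖ * ‖τ w‖) := by
          exact mul_le_mul_of_nonneg_left (aux_bound_right t hinner T₂ w) (norm_nonneg _)
      _ = (‖T₁‖ * ‖T₂‖) * ‖τ w‖ := by ring
  have hinj : Function.Injective τ := by
    have h0 : ∀ w, τ w = 0 → w = 0 := by
      intro w hw
      obtain ⟨n, e, y, he, rfl⟩ := aux_rep w
      have h2 := aux_norm t hinner he y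
      rw [map_sum] at hw
      simp only [hτt] at hw
      rw [hw, norm_zero] at h2
      have h4 : ∀ i ∈ Finset.univ, ‖y i‖ ^ 2 = 0 := by
        refine (Finset.sum_eq_zero_iff_of_nonneg (fun i _ => sq_nonneg ‖y i‖)).mp ?_
        rw [← h2]; norm_num
      have h5 : ∀ i ∈ (Finset.univ : Finset (Fin n)), e i ⊗ₜ[ℂ] y i = 0 := by
        intro i hi
        have : y i = 0 := by
          have := h4 i hi
          have : ‖y i‖ = 0 := by nlinarith [norm_nonneg (y i)]
          simpa using this
        rw [this, TensorProduct.tmul_zero]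
      rw [Finset.sum_congr rfl h5, Finset.sum_const_zero]
    intro a b hab
    have := h0 (a - b) (by rw [map_sub, hab, sub_self])
    exact sub_eq_zero.mp this
  set M := LinearMap.range τ with hM
  have hMeq : M = Submodule.span ℂ (Set.range fun p : E₁ × E₂ => t p.1 p.2) := by
    apply le_antisymm
    · rintro _ ⟨w, rfl⟩
      induction w using TensorProduct.induction_on with
      | zero => rw [map_zero]; exact Submodule.zero_mem _
      | tmul x y =>
          rw [hτt]
          exact Submodule.subset_span ⟨(x, y), rfl⟩
      | add a b ha hb => rw [map_add]; exact Submodule.add_mem _ ha hb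
    · rw [Submodule.span_le]
      rintro _ ⟨p, rfl⟩
      exact ⟨p.1 ⊗ₜ[ℂ] p.2, rfl⟩
  have hMdense : Dense (M : Set F) := by rw [hMeq]; exact hdense
  let eqv : (E₁ ⊗[ℂ] E₂) ≃ₗ[ℂ] M := LinearEquiv.ofInjective τ hinj
  let A₀ : M →ₗ[ℂ] F := L ∘ₗ (eqv.symm : M →ₗ[ℂ] E₁ ⊗[ℂ] E₂)
  have hcoe : ∀ w : E₁ ⊗[ℂ] E₂, ((eqv w : M) : F) = τ w := fun w => rfl
  have hA₀ : ∀ w, A₀ (eqv w) = L w := by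
    intro w
    show L ((eqv.symm : M →ₗ[ℂ] E₁ ⊗[ℂ] E₂) (eqv w)) = L w
    rw [LinearEquiv.coe_coe, LinearEquiv.symm_apply_apply]
  have hA₀b : ∀ m : M, ‖A₀ m‖ ≤ (‖T₁‖ * ‖T₂‖) * ‖m‖ := by
    intro m
    obtain ⟨w, rfl⟩ : ∃ w, eqv w = m := eqv.surjective m
    rw [hA₀]
    have hnm : ‖(eqv w : M)‖ = ‖τ w‖ := by rw [← hcoe w]; rfl
    rw [hnm]
    exact hbound w
  let A₁ : M →L[ℂ] F := A₀.mkContinuous _ hA₀b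
  have hdr : DenseRange (M.subtypeL) := by
    have h : Set.range (M.subtypeL) = (M : Set F) := Subtype.range_coe
    rw [DenseRange, h]
    exact hMdense
  have hui : IsUniformInducing (M.subtypeL) :=
    (isometry_subtype_coe : Isometry ((↑) : M → F)).isUniformInducing
  refine ⟨A₁.extend M.subtypeL, fun x y => ?_⟩
  have hxy : t x y = M.subtypeL (eqv (x ⊗ₜ[ℂ] y)) := by
    show t x y = ((eqv (x ⊗ₜ[ℂ] y) : M) : F)
    rw [hcoe, hτt]
  rw [hxy, ContinuousLinearMap.extend_eq _ hdr hui]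
  show A₀ (eqv (x ⊗ₜ[ℂ] y)) = t (T₁ x) (T₂ y)
  rw [hA₀]
  show τ (TensorProduct.map (T₁ : E₁ →ₗ[ℂ] E₁) (T₂ : E₂ →ₗ[ℂ] E₂) (x ⊗ₜ[ℂ] y)) = _
  rw [TensorProduct.map_tmul]
  rfl

end helpers

/-- Let `H₁, H₂` be ℤ/2-graded Hilbert spaces (with gradings `γ₁, γ₂`), `D₁` an
odd self-adjoint Fredholm operator on `H₁`, `D₂` an odd self-adjoint operator on `H₂` with
closed range and one-dimensional kernel spanned by an even unit vector `v`.  Let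
`H = H₁ ⊗̂ H₂` (with structure map `t`, grading `γ`), let `P` be the orthogonal projection of
`H` onto `H₁ ⊗̂ ker(D₂)`, and let `D = D₁ ⊗̂ 1 + 1 ⊗̂ D₂`.  Then `D` commutes with `P`, the
compression `PDP` equals `D₁` under the identification `H₁ ⊗̂ ker(D₂) ≅ H₁`, and hence
`ind(D) = ind(D₁) + ind(P⊥ D P⊥)`. -/
theorem graded_tensor_index_decomposition
    {H₁ H₂ : Type*} [NormedAddCommGroup H₁] [InnerProductSpace ℂ H₁] [CompleteSpace H₁]
    [NormedAddCommGroup H₂] [InnerProductSpace ℂ H₂] [CompleteSpace H₂]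
    (γ₁ : H₁ →L[ℂ] H₁) (hγ₁sa : IsSelfAdjoint γ₁) (hγ₁2 : γ₁ * γ₁ = 1)
    (γ₂ : H₂ →L[ℂ] H₂) (hγ₂sa : IsSelfAdjoint γ₂) (hγ₂2 : γ₂ * γ₂ = 1)
    (γ : H →L[ℂ] H) (hγsa : IsSelfAdjoint γ) (hγ2 : γ * γ = 1)
    -- `D₁` : odd self-adjoint Fredholm operator on `H₁`
    (D₁ : H₁ →L[ℂ] H₁) (hD₁sa : IsSelfAdjoint D₁) (hD₁odd : γ₁ * D₁ * γ₁ = -D₁)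
    (hD₁ker : FiniteDimensional ℂ ↥(LinearMap.ker (D₁ : H₁ →ₗ[ℂ] H₁)))
    (hD₁range : IsClosed (LinearMap.range (D₁ : H₁ →ₗ[ℂ] H₁) : Set H₁))
    -- `D₂` : odd self-adjoint operator on `H₂` with closed range and kernel spanned by the
    -- even unit vector `v`
    (D₂ : H₂ →L[ℂ] H₂) (hD₂sa : IsSelfAdjoint D₂) (hD₂odd : γ₂ * D₂ * γ₂ = -D₂)
    (hD₂range : IsClosed (LinearMap.range (D₂ : H₂ →ₗ[ℂ] H₂) : Set H₂))
    (v : H₂) (hv : ‖v‖ = 1) (hvker : LinearMap.ker (D₂ : H₂ →ₗ[ℂ] H₂) = Submodule.span ℂ {v})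
    (hveven : γ₂ v = v)
    -- `t` realizes `H` as the graded tensor product `H₁ ⊗̂ H₂`
    (t : H₁ →ₗ[ℂ] H₂ →ₗ[ℂ] H)
    (hinner : ∀ (x x' : H₁) (y y' : H₂), ⟪t x y, t x' y'⟫ = ⟪x, x'⟫ * ⟪y, y'⟫)
    (hdense : Dense (↑(Submodule.span ℂ (Set.range fun p : H₁ × H₂ => t p.1 p.2)) : Set H))
    (hgrading : ∀ (x : H₁) (y : H₂), γ (t x y) = t (γ₁ x) (γ₂ y))
    -- `P` : the orthogonal projection onto `H₁ ⊗̂ ker D₂`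
    (P : H →L[ℂ] H) (hPsa : IsSelfAdjoint P) (hPidem : P * P = P)
    (hPrange : (LinearMap.range (P : H →ₗ[ℂ] H) : Set H)
      = closure (↑(Submodule.span ℂ (Set.range fun x : H₁ => t x v)) : Set H))
    -- `D = D₁ ⊗̂ 1 + 1 ⊗̂ D₂`
    (D : H →L[ℂ] H) (hDsa : IsSelfAdjoint D)
    (hD : ∀ (x : H₁) (y : H₂), D (t x y) = t (D₁ x) y + t (γ₁ x) (D₂ y)) :
    D * P = P * D ∧
    (∀ x : H₁, D (t x v) = t (D₁ x) v) ∧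
    grIndex γ D = grIndex γ₁ D₁ +
      ((Module.finrank ℂ
          ↥(LinearMap.ker (D : H →ₗ[ℂ] H) ⊓ LinearMap.ker ((γ - 1 : H →L[ℂ] H) : H →ₗ[ℂ] H) ⊓ LinearMap.range ((1 - P : H →L[ℂ] H) : H →ₗ[ℂ] H)) : ℤ) -
        (Module.finrank ℂ
          ↥(LinearMap.ker (D : H →ₗ[ℂ] H) ⊓ LinearMap.ker ((γ + 1 : H →L[ℂ] H) : H →ₗ[ℂ] H) ⊓ LinearMap.range ((1 - P : H →L[ℂ] H) : H →ₗ[ℂ] H)) : ℤ)) := by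
  classical
  -- pointwise forms of the algebraic hypotheses
  have hγ₁γ₁ : ∀ x : H₁, γ₁ (γ₁ x) = x := by
    intro x
    have h := ContinuousLinearMap.ext_iff.mp hγ₁2 x
    simpa using h
  have hanti : ∀ x : H₁, D₁ (γ₁ x) = - γ₁ (D₁ x) := by
    intro x
    have h1 := ContinuousLinearMap.ext_iff.mp hD₁odd x
    have h2 : γ₁ (D₁ (γ₁ x)) = -(D₁ x) := by simpa using h1
    have h3 := congrArg γ₁ h2
    rw [hγ₁γ₁, map_neg] at h3
    exact h3
  have hDsym : ∀ u w : H, ⟪D u, w⟫ = ⟪u, D w⟫ := by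
    intro u w
    conv_lhs => rw [← hDsa]
    rw [ContinuousLinearMap.star_eq_adjoint, ContinuousLinearMap.adjoint_inner_left]
  have hPsym : ∀ u w : H, ⟪P u, w⟫ = ⟪u, P w⟫ := by
    intro u w
    conv_lhs => rw [← hPsa]
    rw [ContinuousLinearMap.star_eq_adjoint, ContinuousLinearMap.adjoint_inner_left]
  have hD₂sym : ∀ y z : H₂, ⟪D₂ y, z⟫ = ⟪y, D₂ z⟫ := by
    intro y z
    conv_lhs => rw [← hD₂sa]
    rw [ContinuousLinearMap.star_eq_adjoint, ContinuousLinearMap.adjoint_inner_left]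
  have hvv : ⟪v, v⟫ = 1 := by
    rw [inner_self_eq_norm_sq_to_K, hv]
    norm_num
  have hD₂v : D₂ v = 0 := by
    have hmem : v ∈ LinearMap.ker (D₂ : H₂ →ₗ[ℂ] H₂) := by
      rw [hvker]; exact Submodule.mem_span_singleton_self v
    exact LinearMap.mem_ker.mp hmem
  -- part 2
  have part2 : ∀ x : H₁, D (t x v) = t (D₁ x) v := by
    intro x
    rw [hD x v, hD₂v, map_zero, add_zero]
  -- the isometry J : x ↦ t x v
  have hJinner0 : ∀ x x' : H₁, ⟪(t.flip v) x, (t.flip v) x'⟫ = ⟪x, x'⟫ := by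
    intro x x'
    simp only [LinearMap.flip_apply]
    rw [hinner, hvv, mul_one]
  set Jiso : H₁ →ₗᵢ[ℂ] H := (t.flip v).isometryOfInner hJinner0 with hJiso
  set J : H₁ →L[ℂ] H := Jiso.toContinuousLinearMap with hJdef
  have hJapp : ∀ x : H₁, J x = t x v := fun x => rfl
  have hJnorm : ∀ x : H₁, ‖t x v‖ = ‖x‖ := by
    intro x
    rw [← hJapp]
    exact Jiso.norm_map x
  have hJinner : ∀ x x' : H₁, ⟪J x, J x'⟫ = ⟪x, x'⟫ := fun x x' => hJinner0 x x'
  have hJadj : ∀ (x : H₁) (y : H₂),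
      (ContinuousLinearMap.adjoint J) (t x y) = ⟪v, y⟫ • x := by
    intro x y
    apply ext_inner_right ℂ
    intro x'
    rw [ContinuousLinearMap.adjoint_inner_left, hJapp, hinner, inner_smul_left,
      inner_conj_symm]
    ring
  have hJJ : ∀ x : H₁, (ContinuousLinearMap.adjoint J) (J x) = x := by
    intro x
    rw [hJapp, hJadj, hvv, one_smul]
  -- identification of the range of P
  have hJcl : IsClosed (Set.range fun x : H₁ => t x v) := by
    have h : (Set.range fun x : H₁ => t x v) = Set.range Jiso := by
      ext u
      constructor <;> rintro ⟨x, rfl⟩ <;> exact ⟨x, rfl⟩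
    rw [h]
    exact Jiso.isometry.isClosedEmbedding.isClosed_range
  have hPset : (LinearMap.range (P : H →ₗ[ℂ] H) : Set H) = Set.range fun x : H₁ => t x v := by
    rw [hPrange]
    have h3 : (Set.range fun x : H₁ => t x v) = ↑(LinearMap.range (t.flip v)) := by
      rw [LinearMap.coe_range]
      rfl
    have h2 : Submodule.span ℂ (Set.range fun x : H₁ => t x v)
        = LinearMap.range (t.flip v) := by
      rw [h3, Submodule.span_eq]
    have h4 : Set.range ⇑(t.flip v) = Set.range fun x : H₁ => t x v := by
      ext u
      simp [LinearMap.flip_apply]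
    rw [h2, LinearMap.coe_range, h4, hJcl.closure_eq]
  have hPfix : ∀ w : H, w ∈ Set.range (fun x : H₁ => t x v) → P w = w := by
    rintro w hw
    have hmem : w ∈ (LinearMap.range (P : H →ₗ[ℂ] H) : Set H) := by rw [hPset]; exact hw
    obtain ⟨z, hz⟩ := hmem
    rw [← hz]
    have h := ContinuousLinearMap.ext_iff.mp hPidem z
    simpa using h
  have hPmem : ∀ u : H, ∃ x : H₁, P u = t x v := by
    intro u
    have hmem : P u ∈ (LinearMap.range (P : H →ₗ[ℂ] H) : Set H) := ⟨u, rfl⟩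
    rw [hPset] at hmem
    obtain ⟨x, hx⟩ := hmem
    exact ⟨x, hx.symm⟩
  have hPP : ∀ u : H, P (P u) = P u := by
    intro u
    have h := ContinuousLinearMap.ext_iff.mp hPidem u
    simpa using h
  -- Part 1
  have part1 : D * P = P * D := by
    ext u
    show D (P u) = P (D u)
    obtain ⟨x, hx⟩ := hPmem u
    have hDPu : D (P u) = t (D₁ x) v := by rw [hx, part2]
    have hPw : P (u - P u) = 0 := by
      rw [map_sub, hPP, sub_self]
    have hPDw : P (D (u - P u)) = 0 := by
      set w := u - P u with hwdef
      set z := P (D w) with hzdef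
      obtain ⟨x', hx'⟩ := hPmem (D w)
      have hz : ⟪z, z⟫ = 0 := by
        have c1 : ⟪z, z⟫ = ⟪D w, z⟫ := by
          conv_lhs => rw [hzdef]
          rw [hPsym]
          congr 1
          rw [hzdef, hPP]
        have c2 : ⟪D w, z⟫ = ⟪w, D z⟫ := hDsym w z
        have c3 : D z = t (D₁ x') v := by rw [hzdef, hx', part2]
        have hPfix' : P (t (D₁ x') v) = t (D₁ x') v := hPfix _ ⟨D₁ x', by rfl⟩
        have c4 : ⟪w, D z⟫ = 0 := by
          rw [c2] at c1
          rw [c3]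
          calc ⟪w, t (D₁ x') v⟫ = ⟪w, P (t (D₁ x') v)⟫ := by rw [hPfix']
            _ = ⟪P w, t (D₁ x') v⟫ := (hPsym w _).symm
            _ = 0 := by rw [hPw, inner_zero_left]
        rw [c1, c2, c4]
      exact inner_self_eq_zero.mp hz
    have hsplit : P (D u) = P (D (P u)) + P (D (u - P u)) := by
      have : u = P u + (u - P u) := by abel
      conv_lhs => rw [this]
      rw [map_add, map_add]
    rw [hsplit, hPDw, add_zero, hDPu, hPfix _ ⟨D₁ x, by rfl⟩]
  -- ===== construction of the partial inverse S of D₂ =====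
  set K : Submodule ℂ H₂ := (Submodule.span ℂ {v})ᗮ with hK
  haveI : CompleteSpace K := (Submodule.isClosed_orthogonal _).completeSpace_coe
  have hKmem : ∀ z : H₂, z ∈ K ↔ ⟪v, z⟫ = 0 := by
    intro z
    rw [hK, Submodule.mem_orthogonal]
    constructor
    · intro h
      exact h v (Submodule.mem_span_singleton_self v)
    · intro h u hu
      rw [Submodule.mem_span_singleton] at hu
      obtain ⟨c, rfl⟩ := hu
      rw [inner_smul_left, h, mul_zero]
  have hD₂K : ∀ y : H₂, D₂ y ∈ K := by
    intro y
    rw [hKmem, ← hD₂sym v y, hD₂v, inner_zero_left]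
  have hRK : LinearMap.range (D₂ : H₂ →ₗ[ℂ] H₂) = K := by
    haveI : CompleteSpace (LinearMap.range (D₂ : H₂ →ₗ[ℂ] H₂)) := hD₂range.completeSpace_coe
    have h1 : (LinearMap.range (D₂ : H₂ →ₗ[ℂ] H₂))ᗮ = LinearMap.ker (D₂ : H₂ →ₗ[ℂ] H₂) := by
      ext w
      rw [Submodule.mem_orthogonal, LinearMap.mem_ker]
      constructor
      · intro h
        have h2 := h (D₂ (D₂ w)) ⟨D₂ w, rfl⟩
        rw [hD₂sym] at h2
        exact inner_self_eq_zero.mp h2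
      · intro h u hu
        obtain ⟨z, rfl⟩ := hu
        rw [ContinuousLinearMap.coe_coe] at h ⊢
        rw [hD₂sym, h, inner_zero_right]
    calc LinearMap.range (D₂ : H₂ →ₗ[ℂ] H₂) = (LinearMap.range (D₂ : H₂ →ₗ[ℂ] H₂))ᗮᗮ :=
          (Submodule.orthogonal_orthogonal _).symm
      _ = (LinearMap.ker (D₂ : H₂ →ₗ[ℂ] H₂))ᗮ := by rw [h1]
      _ = K := by rw [hvker, hK]
  set f : K →L[ℂ] K := (D₂.comp K.subtypeL).codRestrict K (fun k => hD₂K _) with hf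
  have hfapp : ∀ k : K, (f k : H₂) = D₂ (k : H₂) := fun k => rfl
  have hfinj : LinearMap.ker (f : K →ₗ[ℂ] K) = ⊥ := by
    rw [eq_bot_iff]
    rintro k hk
    have h1 : D₂ (k : H₂) = 0 := by
      have h := LinearMap.mem_ker.mp hk
      have h2 := congrArg (Subtype.val) h
      rw [ContinuousLinearMap.coe_coe, hfapp] at h2
      simpa using h2
    have h2 : (k : H₂) ∈ Submodule.span ℂ {v} := by
      rw [← hvker]
      exact LinearMap.mem_ker.mpr h1
    have h3 : ⟪v, (k : H₂)⟫ = 0 := (hKmem _).mp k.2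
    have h4 : ⟪(k : H₂), (k : H₂)⟫ = 0 := by
      rw [Submodule.mem_span_singleton] at h2
      obtain ⟨c, hc⟩ := h2
      rw [← hc, inner_smul_left, hc, h3, mul_zero]
    have h5 : (k : H₂) = 0 := inner_self_eq_zero.mp h4
    rw [Submodule.mem_bot]
    exact Subtype.ext h5
  have hfsurj : LinearMap.range (f : K →ₗ[ℂ] K) = ⊤ := by
    rw [LinearMap.range_eq_top]
    intro k
    have h1 : (k : H₂) ∈ LinearMap.range (D₂ : H₂ →ₗ[ℂ] H₂) := by rw [hRK]; exact k.2
    obtain ⟨y, hy⟩ := h1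
    have hyK : y - ⟪v, y⟫ • v ∈ K := by
      rw [hKmem, inner_sub_right, inner_smul_right, hvv, mul_one, sub_self]
    refine ⟨⟨y - ⟪v, y⟫ • v, hyK⟩, ?_⟩
    apply Subtype.ext
    rw [ContinuousLinearMap.coe_coe, hfapp]
    show D₂ (y - ⟪v, y⟫ • v) = (k : H₂)
    rw [map_sub, map_smul, hD₂v, smul_zero, sub_zero]
    exact hy
  set E := ContinuousLinearEquiv.ofBijective f hfinj hfsurj with hE
  have hEapp : ∀ k : K, E k = f k := fun k => by
    rw [hE, ContinuousLinearEquiv.coeFn_ofBijective]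
  set Qop : H₂ →L[ℂ] H₂ := (innerSL ℂ v).smulRight v with hQ
  have hQop : ∀ y, Qop y = ⟪v, y⟫ • v := fun y => rfl
  have hπmem : ∀ y : H₂, (1 - Qop) y ∈ K := by
    intro y
    have h : (1 - Qop) y = y - ⟪v, y⟫ • v := by
      rw [ContinuousLinearMap.sub_apply, ContinuousLinearMap.one_apply, hQop]
    rw [h, hKmem, inner_sub_right, inner_smul_right, hvv, mul_one, sub_self]
  set π : H₂ →L[ℂ] K := (1 - Qop).codRestrict K hπmem with hπ
  have hπapp : ∀ y, ((π y : K) : H₂) = y - ⟪v, y⟫ • v := fun y => by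
    show (1 - Qop) y = _
    rw [ContinuousLinearMap.sub_apply, ContinuousLinearMap.one_apply, hQop]
  set S : H₂ →L[ℂ] H₂ := K.subtypeL ∘L ((E.symm : K ≃L[ℂ] K) : K →L[ℂ] K) ∘L π with hS
  have hSapp : ∀ y, S y = ((E.symm (π y) : K) : H₂) := fun y => rfl
  have hDS : ∀ y, D₂ (S y) = y - ⟪v, y⟫ • v := by
    intro y
    rw [hSapp]
    have h1 : D₂ ((E.symm (π y) : K) : H₂) = ((f (E.symm (π y)) : K) : H₂) := rfl
    rw [h1]
    have h2 : f (E.symm (π y)) = π y := by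
      have h3 := E.apply_symm_apply (π y)
      rwa [hEapp] at h3
    rw [h2, hπapp]
  have hSD : ∀ y, S (D₂ y) = y - ⟪v, y⟫ • v := by
    intro y
    have hvD : ⟪v, D₂ y⟫ = 0 := by rw [← hD₂sym v y, hD₂v, inner_zero_left]
    have h1 : π (D₂ y) = f (π y) := by
      apply Subtype.ext
      rw [hπapp, hfapp, hπapp, hvD, zero_smul, sub_zero, map_sub, map_smul, hD₂v,
        smul_zero, sub_zero]
    rw [hSapp, h1]
    have h2 : E.symm (f (π y)) = π y := by
      rw [← hEapp, E.symm_apply_apply]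
    rw [h2, hπapp]
  -- ===== the operator B = γ₁ ⊗ S and the homotopy identity =====
  obtain ⟨B, hB⟩ := tensor_op_exists t hinner hdense γ₁ S
  have ext_t : ∀ (F G : H →L[ℂ] H), (∀ x y, F (t x y) = G (t x y)) → F = G := by
    intro F G h
    ext u
    have hEq : Set.EqOn ⇑F ⇑G
        (↑(Submodule.span ℂ (Set.range fun p : H₁ × H₂ => t p.1 p.2)) : Set H) := by
      intro w hw
      induction hw using Submodule.span_induction with
      | mem z hz => obtain ⟨p, rfl⟩ := hz; exact h p.1 p.2
      | zero => simp
      | add a b _ _ ha hb => simp [ha, hb]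
      | smul c a _ ha => simp [ha]
    have hcl := hEq.closure F.continuous G.continuous
    have hu : u ∈ closure
        (↑(Submodule.span ℂ (Set.range fun p : H₁ × H₂ => t p.1 p.2)) : Set H) := by
      rw [hdense.closure_eq]; trivial
    exact hcl hu
  have hkey : D ∘L B + B ∘L D
      = (2 : ℂ) • (ContinuousLinearMap.id ℂ H)
        - (2 : ℂ) • (J ∘L ContinuousLinearMap.adjoint J) := by
    apply ext_t
    intro x y
    simp only [ContinuousLinearMap.add_apply, ContinuousLinearMap.comp_apply,
      ContinuousLinearMap.sub_apply, ContinuousLinearMap.smul_apply,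
      ContinuousLinearMap.coe_id', id]
    have hDB : D (B (t x y)) = t (D₁ (γ₁ x)) (S y) + t x (y - ⟪v, y⟫ • v) := by
      rw [hB, hD, hγ₁γ₁, hDS]
    have hBD : B (D (t x y)) = t (γ₁ (D₁ x)) (S y) + t x (y - ⟪v, y⟫ • v) := by
      rw [hD, map_add, hB, hB, hγ₁γ₁, hSD]
    have hJJt : J (ContinuousLinearMap.adjoint J (t x y)) = ⟪v, y⟫ • t x v := by
      rw [hJadj, map_smul, hJapp]
    rw [hDB, hBD, hJJt, hanti]
    have hC : t x (y - ⟪v, y⟫ • v) = t x y - ⟪v, y⟫ • t x v := by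
      rw [map_sub, map_smul]
    have hN : t (-(γ₁ (D₁ x))) (S y) = -(t (γ₁ (D₁ x)) (S y)) := by
      rw [map_neg, LinearMap.neg_apply]
    rw [hC, hN]
    module
  -- kernel of D is contained in the range of J
  have hfix : ∀ u : H, D u = 0 → J (ContinuousLinearMap.adjoint J u) = u := by
    intro u hu
    have h1 : ⟪u, D (B u) + B (D u)⟫ = 0 := by
      rw [inner_add_right, hu, map_zero, inner_zero_right, add_zero, ← hDsym, hu,
        inner_zero_left]
    have h2 := congrArg (fun T : H →L[ℂ] H => ⟪u, T u⟫) hkey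
    simp only [ContinuousLinearMap.add_apply, ContinuousLinearMap.comp_apply,
      ContinuousLinearMap.sub_apply, ContinuousLinearMap.smul_apply,
      ContinuousLinearMap.coe_id', id] at h2
    rw [h1] at h2
    rw [inner_sub_right, inner_smul_right, inner_smul_right] at h2
    have h3 : ⟪u, u⟫ = ⟪u, J (ContinuousLinearMap.adjoint J u)⟫ := by
      linear_combination -h2 / 2
    have h4 : ⟪u, u⟫
        = ⟪ContinuousLinearMap.adjoint J u, ContinuousLinearMap.adjoint J u⟫ := by
      rw [h3, ← ContinuousLinearMap.adjoint_inner_left J (ContinuousLinearMap.adjoint J u) u]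
    set w := J (ContinuousLinearMap.adjoint J u) with hwdef
    have hww : ⟪w, w⟫ = ⟪u, u⟫ := by
      rw [hwdef, hJinner, ← h4]
    have huw : ⟪u, w⟫ = ⟪u, u⟫ := h3.symm
    have hwu : ⟪w, u⟫ = ⟪u, u⟫ := by
      rw [← inner_conj_symm w u, huw, inner_conj_symm]
    have h5 : ⟪u - w, u - w⟫ = 0 := by
      rw [inner_sub_sub_self, hww, huw, hwu]
      ring
    have h6 : u - w = 0 := inner_self_eq_zero.mp h5
    rw [hwdef] at h6
    have := sub_eq_zero.mp h6
    exact this.symm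
  have hkerD : ∀ u : H, D u = 0 → ∃ x : H₁, u = t x v := by
    intro u hu
    exact ⟨ContinuousLinearMap.adjoint J u, by rw [← hJapp, hfix u hu]⟩
  -- correction terms vanish
  have hcorr : ∀ g : H →L[ℂ] H,
      LinearMap.ker (D : H →ₗ[ℂ] H) ⊓ LinearMap.ker (g : H →ₗ[ℂ] H) ⊓ LinearMap.range ((1 - P : H →L[ℂ] H) : H →ₗ[ℂ] H) = ⊥ := by
    intro g
    rw [eq_bot_iff]
    rintro u hu
    obtain ⟨hu12, hu3⟩ := Submodule.mem_inf.mp hu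
    obtain ⟨hu1, _⟩ := Submodule.mem_inf.mp hu12
    have hDu : D u = 0 := LinearMap.mem_ker.mp hu1
    obtain ⟨x, rfl⟩ := hkerD u hDu
    have hP1 : P (t x v) = t x v := hPfix _ ⟨x, rfl⟩
    obtain ⟨z, hz⟩ := hu3
    have hP0 : P (t x v) = 0 := by
      rw [← hz]
      have hz2 : (1 - P) z = z - P z := by
        rw [ContinuousLinearMap.sub_apply, ContinuousLinearMap.one_apply]
      rw [ContinuousLinearMap.coe_coe, hz2, map_sub, hPP, sub_self]
    rw [Submodule.mem_bot, ← hP1, hP0]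
  -- dimension transfer between kernels
  have hiso : ∀ (g₁ : H₁ →L[ℂ] H₁) (g : H →L[ℂ] H),
      (∀ x : H₁, g (t x v) = t (g₁ x) v) →
      Module.finrank ℂ ↥(LinearMap.ker (D : H →ₗ[ℂ] H) ⊓ LinearMap.ker (g : H →ₗ[ℂ] H))
        = Module.finrank ℂ ↥(LinearMap.ker (D₁ : H₁ →ₗ[ℂ] H₁) ⊓ LinearMap.ker (g₁ : H₁ →ₗ[ℂ] H₁)) := by
    intro g₁ g hg
    have hmemF : ∀ u : H, u ∈ LinearMap.ker (D : H →ₗ[ℂ] H) ⊓ LinearMap.ker (g : H →ₗ[ℂ] H) →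
        ContinuousLinearMap.adjoint J u ∈ LinearMap.ker (D₁ : H₁ →ₗ[ℂ] H₁) ⊓ LinearMap.ker (g₁ : H₁ →ₗ[ℂ] H₁) := by
      intro u hu
      obtain ⟨hu1, hu2⟩ := Submodule.mem_inf.mp hu
      have hDu : D u = 0 := LinearMap.mem_ker.mp hu1
      have hgu : g u = 0 := LinearMap.mem_ker.mp hu2
      set x := ContinuousLinearMap.adjoint J u with hxdef
      have hux : u = t x v := by rw [← hJapp, hfix u hDu]
      refine Submodule.mem_inf.mpr ⟨?_, ?_⟩
      · have e1 : t (D₁ x) v = 0 := by rw [← part2, ← hux, hDu]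
        have e2 : ‖D₁ x‖ = 0 := by rw [← hJnorm, e1, norm_zero]
        exact LinearMap.mem_ker.mpr (norm_eq_zero.mp e2)
      · have e1 : t (g₁ x) v = 0 := by rw [← hg, ← hux, hgu]
        have e2 : ‖g₁ x‖ = 0 := by rw [← hJnorm, e1, norm_zero]
        exact LinearMap.mem_ker.mpr (norm_eq_zero.mp e2)
    have hmemG : ∀ x : H₁, x ∈ LinearMap.ker (D₁ : H₁ →ₗ[ℂ] H₁) ⊓ LinearMap.ker (g₁ : H₁ →ₗ[ℂ] H₁) →
        t x v ∈ LinearMap.ker (D : H →ₗ[ℂ] H) ⊓ LinearMap.ker (g : H →ₗ[ℂ] H) := by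
      intro x hx
      obtain ⟨hx1, hx2⟩ := Submodule.mem_inf.mp hx
      have hD₁x : D₁ x = 0 := LinearMap.mem_ker.mp hx1
      have hg₁x : g₁ x = 0 := LinearMap.mem_ker.mp hx2
      refine Submodule.mem_inf.mpr ⟨?_, ?_⟩
      · refine LinearMap.mem_ker.mpr ?_
        rw [ContinuousLinearMap.coe_coe, part2, hD₁x, map_zero, LinearMap.zero_apply]
      · refine LinearMap.mem_ker.mpr ?_
        rw [ContinuousLinearMap.coe_coe, hg, hg₁x, map_zero, LinearMap.zero_apply]
    refine LinearEquiv.finrank_eq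
      ({ toFun := fun u => ⟨ContinuousLinearMap.adjoint J (u : H), hmemF _ u.2⟩
         map_add' := by
           intro a b
           apply Subtype.ext
           simp [map_add]
         map_smul' := by
           intro c a
           apply Subtype.ext
           simp
         invFun := fun x => ⟨t (x : H₁) v, hmemG _ x.2⟩
         left_inv := ?_
         right_inv := ?_ } :
        ↥(LinearMap.ker (D : H →ₗ[ℂ] H) ⊓ LinearMap.ker (g : H →ₗ[ℂ] H)) ≃ₗ[ℂ] ↥(LinearMap.ker (D₁ : H₁ →ₗ[ℂ] H₁) ⊓ LinearMap.ker (g₁ : H₁ →ₗ[ℂ] H₁)))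
    · rintro ⟨u, hu⟩
      apply Subtype.ext
      show t (ContinuousLinearMap.adjoint J u) v = u
      have hDu : D u = 0 :=
        LinearMap.mem_ker.mp (Submodule.mem_inf.mp hu).1
      rw [← hJapp, hfix u hDu]
    · rintro ⟨x, hx⟩
      apply Subtype.ext
      show ContinuousLinearMap.adjoint J (t x v) = x
      rw [← hJapp, hJJ]
  have hgminus : ∀ x : H₁, (γ - 1) (t x v) = t ((γ₁ - 1) x) v := by
    intro x
    simp only [ContinuousLinearMap.sub_apply, ContinuousLinearMap.one_apply]
    rw [hgrading, hveven, map_sub, LinearMap.sub_apply]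
  have hgplus : ∀ x : H₁, (γ + 1) (t x v) = t ((γ₁ + 1) x) v := by
    intro x
    simp only [ContinuousLinearMap.add_apply, ContinuousLinearMap.one_apply]
    rw [hgrading, hveven, map_add, LinearMap.add_apply]
  refine ⟨part1, part2, ?_⟩
  rw [hcorr (γ - 1), hcorr (γ + 1)]
  simp only [grIndex, hiso _ _ hgminus, hiso _ _ hgplus, finrank_bot]
  ring
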